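/- Let H be a bialgebra over a field k and J ∈ H ⊗ H, written J = ∑ J¹ ⊗ J². Define a bilinear product ∗ on the dual space H* = Hom_k(H, k) by (X ∗ Y)(h) = ∑ X(h₍₁₎ J¹) · Y(h₍₂₎ J²) for X, Y ∈ H*, h ∈ H (using Sweedler notation Δ(h) = h₍₁₎ ⊗ h₍₂₎). Then: (a) ∗ is associative if and only if ((Δ⊗id)(J))·(J⊗1) = ((id⊗Δ)(J))·(1⊗J) in H ⊗ H ⊗ H; (b) the counit ε is a two-sided unit for ∗ if and only if (ε⊗id)(J) = 1 = (id⊗ε)(J). -/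

import Mathlib

open scoped TensorProduct

set_option synthInstance.maxHeartbeats 1000000
set_option maxHeartbeats 1000000

noncomputable section

variable (k H : Type*) [Field k] [Ring H] [Bialgebra k H]

/-- `Δ ⊗ id : H ⊗ H → H ⊗ H ⊗ H` (with `H ⊗ H ⊗ H = H ⊗ (H ⊗ H)`). -/
def comul12 : (H ⊗[k] H) →ₗ[k] H ⊗[k] (H ⊗[k] H) :=
  (TensorProduct.assoc k H H H).toLinearMap ∘ₗ
    TensorProduct.map (Coalgebra.comul (R := k) (A := H)) LinearMap.id

/-- `id ⊗ Δ : H ⊗ H → H ⊗ H ⊗ H`. -/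
def comul23 : (H ⊗[k] H) →ₗ[k] H ⊗[k] (H ⊗[k] H) :=
  TensorProduct.map LinearMap.id (Coalgebra.comul (R := k) (A := H))

/-- `ε ⊗ id : H ⊗ H → H`. -/
def counitL : (H ⊗[k] H) →ₗ[k] H :=
  (TensorProduct.lid k H).toLinearMap ∘ₗ
    TensorProduct.map (Coalgebra.counit (R := k) (A := H)) LinearMap.id

/-- `id ⊗ ε : H ⊗ H → H`. -/
def counitR : (H ⊗[k] H) →ₗ[k] H :=
  (TensorProduct.rid k H).toLinearMap ∘ₗ
    TensorProduct.map LinearMap.id (Coalgebra.counit (R := k) (A := H))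

/-- The element `J ⊗ 1` of `H ⊗ (H ⊗ H)`. -/
def tmulOne (J : H ⊗[k] H) : H ⊗[k] (H ⊗[k] H) :=
  TensorProduct.assoc k H H H (J ⊗ₜ[k] (1 : H))

/-- The twisted convolution product on `H* = Hom_k(H, k)`:
`(X ∗ Y)(h) = ∑ X(h₍₁₎ J¹) · Y(h₍₂₎ J²)`, i.e. `(X ⊗ Y)(Δ(h) · J)`. -/
def twMul (J : H ⊗[k] H) (X Y : Module.Dual k H) : Module.Dual k H :=
  ((TensorProduct.lid k k).toLinearMap ∘ₗ TensorProduct.map X Y) ∘ₗ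
    LinearMap.mulRight k J ∘ₗ Coalgebra.comul (R := k) (A := H)

/-! ### Auxiliary lemmas -/

lemma twMul_apply (J : H ⊗[k] H) (X Y : Module.Dual k H) (h : H) :
    twMul k H J X Y h =
      TensorProduct.lid k k (TensorProduct.map X Y (Coalgebra.comul (R := k) h * J)) := by
  simp [twMul]

/-- The linear associator is multiplicative. -/
lemma assocLin_mul (x y : (H ⊗[k] H) ⊗[k] H) :
    TensorProduct.assoc k H H H (x * y) =
      TensorProduct.assoc k H H H x * TensorProduct.assoc k H H H y :=
  map_mul (Algebra.TensorProduct.assoc k k k H H H) x y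

/-- `comul12` as an algebra hom. -/
def comul12Alg : (H ⊗[k] H) →ₐ[k] H ⊗[k] (H ⊗[k] H) :=
  (Algebra.TensorProduct.assoc k k k H H H).toAlgHom.comp
    (Algebra.TensorProduct.map (Bialgebra.comulAlgHom k H) (AlgHom.id k H))

lemma comul12_eq : comul12 k H = (comul12Alg k H).toLinearMap := by
  apply TensorProduct.ext'
  intro a b
  simp [comul12, comul12Alg]
  rfl

/-- `comul23` as an algebra hom. -/
def comul23Alg : (H ⊗[k] H) →ₐ[k] H ⊗[k] (H ⊗[k] H) :=
  Algebra.TensorProduct.map (AlgHom.id k H) (Bialgebra.comulAlgHom k H)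

lemma comul23_eq : comul23 k H = (comul23Alg k H).toLinearMap := by
  apply TensorProduct.ext'
  intro a b
  simp [comul23, comul23Alg]

lemma comul12_mul (u v : H ⊗[k] H) :
    comul12 k H (u * v) = comul12 k H u * comul12 k H v := by
  rw [comul12_eq]; exact map_mul (comul12Alg k H) u v

lemma comul23_mul (u v : H ⊗[k] H) :
    comul23 k H (u * v) = comul23 k H u * comul23 k H v := by
  rw [comul23_eq]; exact map_mul (comul23Alg k H) u v

lemma comul12_one : comul12 k H 1 = 1 := by
  rw [comul12_eq]; exact map_one (comul12Alg k H)

lemma comul23_one : comul23 k H 1 = 1 := by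
  rw [comul23_eq]; exact map_one (comul23Alg k H)

/-- Coassociativity in the present language. -/
lemma comul12_comul (h : H) :
    comul12 k H (Coalgebra.comul (R := k) h) = comul23 k H (Coalgebra.comul (R := k) h) := by
  have := Coalgebra.coassoc_apply (R := k) (A := H) h
  simpa [comul12, comul23, LinearMap.rTensor, LinearMap.lTensor] using this

/-- `counitL` as an algebra hom. -/
def counitLAlg : (H ⊗[k] H) →ₐ[k] H :=
  (Algebra.TensorProduct.lid k H).toAlgHom.comp
    (Algebra.TensorProduct.map (Bialgebra.counitAlgHom k H) (AlgHom.id k H))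

lemma counitL_eq : counitL k H = (counitLAlg k H).toLinearMap := by
  apply TensorProduct.ext'
  intro a b
  simp [counitL, counitLAlg]

/-- `counitR` as an algebra hom. -/
def counitRAlg : (H ⊗[k] H) →ₐ[k] H :=
  (Algebra.TensorProduct.rid k k H).toAlgHom.comp
    (Algebra.TensorProduct.map (AlgHom.id k H) (Bialgebra.counitAlgHom k H))

lemma counitR_eq : counitR k H = (counitRAlg k H).toLinearMap := by
  apply TensorProduct.ext'
  intro a b
  simp [counitR, counitRAlg]

lemma counitL_mul (u v : H ⊗[k] H) :
    counitL k H (u * v) = counitL k H u * counitL k H v := by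
  rw [counitL_eq]; exact map_mul (counitLAlg k H) u v

lemma counitR_mul (u v : H ⊗[k] H) :
    counitR k H (u * v) = counitR k H u * counitR k H v := by
  rw [counitR_eq]; exact map_mul (counitRAlg k H) u v

lemma counitL_comul (h : H) : counitL k H (Coalgebra.comul (R := k) h) = h := by
  have := Coalgebra.rTensor_counit_comul (R := k) (A := H) h
  simp only [counitL, LinearMap.coe_comp, Function.comp_apply, LinearEquiv.coe_coe]
  rw [show TensorProduct.map (Coalgebra.counit (R := k) (A := H)) LinearMap.id
      = (Coalgebra.counit (R := k) (A := H)).rTensor H from rfl, this]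
  simp

lemma counitR_comul (h : H) : counitR k H (Coalgebra.comul (R := k) h) = h := by
  have := Coalgebra.lTensor_counit_comul (R := k) (A := H) h
  simp only [counitR, LinearMap.coe_comp, Function.comp_apply, LinearEquiv.coe_coe]
  rw [show TensorProduct.map LinearMap.id (Coalgebra.counit (R := k) (A := H))
      = (Coalgebra.counit (R := k) (A := H)).lTensor H from rfl, this]
  simp

/-- The evaluation of a triple of functionals on `H ⊗ (H ⊗ H)`. -/
def tripleT (X Y Z : Module.Dual k H) : (H ⊗[k] (H ⊗[k] H)) →ₗ[k] k :=
  (TensorProduct.lid k k).toLinearMap ∘ₗ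
    TensorProduct.map X ((TensorProduct.lid k k).toLinearMap ∘ₗ TensorProduct.map Y Z)

lemma tripleT_tmul (X Y Z : Module.Dual k H) (a : H) (w : H ⊗[k] H) :
    tripleT k H X Y Z (a ⊗ₜ[k] w) =
      X a * TensorProduct.lid k k (TensorProduct.map Y Z w) := by
  simp [tripleT, smul_eq_mul]

lemma tripleT_assoc (X Y Z : Module.Dual k H) (w : H ⊗[k] H) (c : H) :
    tripleT k H X Y Z (TensorProduct.assoc k H H H (w ⊗ₜ[k] c)) =
      TensorProduct.lid k k (TensorProduct.map X Y w) * Z c := by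
  induction w using TensorProduct.induction_on with
  | zero => rw [TensorProduct.zero_tmul]; simp
  | tmul p q => simp [tripleT, smul_eq_mul, mul_assoc]
  | add w₁ w₂ h1 h2 => simp [TensorProduct.add_tmul, map_add, add_mul, h1, h2]

/-- Triples of functionals separate points of `H ⊗ (H ⊗ H)`. -/
lemma tripleT_sep (t : H ⊗[k] (H ⊗[k] H))
    (ht : ∀ X Y Z : Module.Dual k H, tripleT k H X Y Z t = 0) : t = 0 := by
  classical
  let b := Module.Basis.ofVectorSpace k H
  let B := b.tensorProduct (b.tensorProduct b)
  have key : ∀ i j l, B.repr t (i, (j, l)) = tripleT k H (b.coord i) (b.coord j) (b.coord l) t := by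
    intro i j l
    have : (Finsupp.lapply (i, (j, l))).comp (B.repr : H ⊗[k] (H ⊗[k] H) →ₗ[k] _)
        = tripleT k H (b.coord i) (b.coord j) (b.coord l) := by
      apply TensorProduct.ext'
      intro a w
      induction w using TensorProduct.induction_on with
      | zero => simp
      | tmul p q =>
        simp [B, Module.Basis.tensorProduct_repr_tmul_apply, tripleT, Module.Basis.coord_apply,
          smul_eq_mul, mul_assoc]
        ring
      | add w₁ w₂ h1 h2 =>
        simp only [TensorProduct.tmul_add, map_add, Finsupp.add_apply] at h1 h2 ⊢
        simp [h1, h2]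
    exact (LinearMap.congr_fun this t)
  have hz : B.repr t = 0 := by
    ext p
    obtain ⟨i, j, l⟩ := p
    rw [Finsupp.zero_apply, key i j l]
    exact ht _ _ _
  exact (LinearEquiv.map_eq_zero_iff B.repr).mp hz

lemma evalL (J : H ⊗[k] H) (X Y Z : Module.Dual k H) (u : H ⊗[k] H) :
    TensorProduct.lid k k (TensorProduct.map (twMul k H J X Y) Z u) =
      tripleT k H X Y Z (comul12 k H u * tmulOne k H J) := by
  induction u using TensorProduct.induction_on with
  | zero => simp
  | tmul a b =>
    have h1 : comul12 k H (a ⊗ₜ[k] b) * tmulOne k H J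
        = TensorProduct.assoc k H H H ((Coalgebra.comul (R := k) a * J) ⊗ₜ[k] b) := by
      have : comul12 k H (a ⊗ₜ[k] b)
          = TensorProduct.assoc k H H H ((Coalgebra.comul (R := k) a) ⊗ₜ[k] b) := by
        simp [comul12]
      rw [this, tmulOne, ← assocLin_mul, Algebra.TensorProduct.tmul_mul_tmul, mul_one]
    rw [h1, tripleT_assoc]
    simp [twMul_apply, smul_eq_mul]
  | add u v hu hv => simp [map_add, add_mul, hu, hv]

lemma evalR (J : H ⊗[k] H) (X Y Z : Module.Dual k H) (u : H ⊗[k] H) :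
    TensorProduct.lid k k (TensorProduct.map X (twMul k H J Y Z) u) =
      tripleT k H X Y Z (comul23 k H u * ((1 : H) ⊗ₜ[k] J)) := by
  induction u using TensorProduct.induction_on with
  | zero => simp
  | tmul a b =>
    have h1 : comul23 k H (a ⊗ₜ[k] b) * ((1 : H) ⊗ₜ[k] J)
        = a ⊗ₜ[k] (Coalgebra.comul (R := k) b * J) := by
      have : comul23 k H (a ⊗ₜ[k] b) = a ⊗ₜ[k] (Coalgebra.comul (R := k) b) := by
        simp [comul23]
      rw [this, Algebra.TensorProduct.tmul_mul_tmul, mul_one]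
    rw [h1, tripleT_tmul]
    simp [twMul_apply, smul_eq_mul]
  | add u v hu hv => simp [map_add, add_mul, hu, hv]

lemma twMulL_apply (J : H ⊗[k] H) (X Y Z : Module.Dual k H) (h : H) :
    twMul k H J (twMul k H J X Y) Z h =
      tripleT k H X Y Z (comul12 k H (Coalgebra.comul (R := k) h) *
        (comul12 k H J * tmulOne k H J)) := by
  rw [twMul_apply, evalL, comul12_mul, mul_assoc]

lemma twMulR_apply (J : H ⊗[k] H) (X Y Z : Module.Dual k H) (h : H) :
    twMul k H J X (twMul k H J Y Z) h =
      tripleT k H X Y Z (comul23 k H (Coalgebra.comul (R := k) h) *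
        (comul23 k H J * ((1 : H) ⊗ₜ[k] J))) := by
  rw [twMul_apply, evalR, comul23_mul, mul_assoc]

lemma evalCounitL (X : Module.Dual k H) (u : H ⊗[k] H) :
    TensorProduct.lid k k (TensorProduct.map (Coalgebra.counit (R := k) (A := H)) X u)
      = X (counitL k H u) := by
  induction u using TensorProduct.induction_on with
  | zero => simp
  | tmul a b => simp [counitL, smul_eq_mul]
  | add u v hu hv => simp [map_add, hu, hv]

lemma evalCounitR (X : Module.Dual k H) (u : H ⊗[k] H) :
    TensorProduct.lid k k (TensorProduct.map X (Coalgebra.counit (R := k) (A := H)) u)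
      = X (counitR k H u) := by
  induction u using TensorProduct.induction_on with
  | zero => simp
  | tmul a b => simp [counitR, smul_eq_mul, mul_comm]
  | add u v hu hv => simp [map_add, hu, hv]

lemma twMul_counit_left (J : H ⊗[k] H) (X : Module.Dual k H) (h : H) :
    twMul k H J (Coalgebra.counit (R := k)) X h = X (h * counitL k H J) := by
  rw [twMul_apply, evalCounitL, counitL_mul, counitL_comul]

lemma twMul_counit_right (J : H ⊗[k] H) (X : Module.Dual k H) (h : H) :
    twMul k H J X (Coalgebra.counit (R := k)) h = X (h * counitR k H J) := by
  rw [twMul_apply, evalCounitR, counitR_mul, counitR_comul]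

theorem stmt_5 (J : H ⊗[k] H) :
    ((∀ X Y Z : Module.Dual k H,
        twMul k H J (twMul k H J X Y) Z = twMul k H J X (twMul k H J Y Z)) ↔
      comul12 k H J * tmulOne k H J = comul23 k H J * ((1 : H) ⊗ₜ[k] J)) ∧
    ((∀ X : Module.Dual k H,
        twMul k H J (Coalgebra.counit (R := k)) X = X ∧
        twMul k H J X (Coalgebra.counit (R := k)) = X) ↔
      (counitL k H J = 1 ∧ counitR k H J = 1)) := by
  constructor
  · constructor
    · intro hass
      apply sub_eq_zero.mp
      apply tripleT_sep
      intro X Y Z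
      have h1 := LinearMap.congr_fun (hass X Y Z) 1
      rw [twMulL_apply, twMulR_apply] at h1
      have hΔ1 : Coalgebra.comul (R := k) (A := H) 1 = 1 := by simp
      rw [hΔ1, comul12_one, comul23_one, one_mul, one_mul] at h1
      rw [map_sub, h1, sub_self]
    · intro hJ X Y Z
      ext h
      rw [twMulL_apply, twMulR_apply, comul12_comul, hJ]
  · constructor
    · intro hunit
      constructor
      · have h1 : ∀ X : Module.Dual k H, X (counitL k H J) = X 1 := by
          intro X
          have := LinearMap.congr_fun (hunit X).1 1
          rwa [twMul_counit_left, one_mul] at this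
        have : ∀ X : Module.Dual k H, X (counitL k H J - 1) = 0 := by
          intro X; rw [map_sub, h1, sub_self]
        have := (Module.forall_dual_apply_eq_zero_iff k _).mp this
        exact sub_eq_zero.mp this
      · have h1 : ∀ X : Module.Dual k H, X (counitR k H J) = X 1 := by
          intro X
          have := LinearMap.congr_fun (hunit X).2 1
          rwa [twMul_counit_right, one_mul] at this
        have : ∀ X : Module.Dual k H, X (counitR k H J - 1) = 0 := by
          intro X; rw [map_sub, h1, sub_self]
        have := (Module.forall_dual_apply_eq_zero_iff k _).mp this
        exact sub_eq_zero.mp this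
    · rintro ⟨hL, hR⟩ X
      constructor
      · ext h
        rw [twMul_counit_left, hL, mul_one]
      · ext h
        rw [twMul_counit_right, hR, mul_one]

end
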